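/- arXiv:1807.04956 — 4 statements merged into one kernel-verified Lean document; each statement's English description precedes it below -/
import Mathlib

section
/- Let ρ be a density matrix on C²⊗C² and let Φ = |φ⁺⟩⟨φ⁺| with |φ⁺⟩ = (|00⟩+|11⟩)/√2. If Tr(ρΦ) ≥ c for some c ∈ [1/2, 1], then every eigenvalue λ of the reduced state ρ_A = Tr_B(ρ) satisfies (1−η)/2 ≤ λ ≤ (1+η)/2, where η = 2√(c(1−c)). -/
open Matrix Kronecker ComplexOrder

noncomputable section

/-- Partial trace over the second tensor factor. -/
def ptraceB {α β : Type*} [Fintype β] (ρ : Matrix (α × β) (α × β) ℂ) : Matrix α α ℂ :=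
  Matrix.of fun a a' => ∑ b, ρ (a, b) (a', b)

/-- The maximally entangled state vector (|00⟩+|11⟩)/√2. -/
def bellPlusVec : Fin 2 × Fin 2 → ℂ :=
  fun p => if p.1 = p.2 then ((Real.sqrt 2)⁻¹ : ℝ) else 0

/-- The projector Φ = |φ⁺⟩⟨φ⁺|. -/
def phiPlus : Matrix (Fin 2 × Fin 2) (Fin 2 × Fin 2) ℂ :=
  Matrix.vecMulVec bellPlusVec (star bellPlusVec)

namespace FidelityAux

/-- Hermitian swap for quadratic forms. -/
lemma herm_swap {n : Type*} [Fintype n] (A : Matrix n n ℂ) (h : A.IsHermitian)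
    (x y : n → ℂ) : star y ⬝ᵥ A *ᵥ x = star (star x ⬝ᵥ A *ᵥ y) := by
  simp only [dotProduct, mulVec, dotProduct, Pi.star_apply, star_sum, star_mul', star_star,
    Finset.mul_sum, Finset.sum_mul]
  rw [Finset.sum_comm]
  refine Finset.sum_congr rfl fun p _ => Finset.sum_congr rfl fun q _ => ?_
  have := congrFun (congrFun h q) p
  rw [conjTranspose_apply] at this
  rw [← this]
  ring

/-- Splitting the quadratic form of the marginal. -/
lemma marginal_split (ρ : Matrix (Fin 2 × Fin 2) (Fin 2 × Fin 2) ℂ) (u w : Fin 2 → ℂ)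
    (hc : ∀ b b' : Fin 2, u b * (starRingEnd ℂ) (u b') + w b * (starRingEnd ℂ) (w b')
       = if b = b' then 1 else 0) :
    star (fun p : Fin 2 × Fin 2 => u p.1 * (starRingEnd ℂ) (u p.2)) ⬝ᵥ
      ρ *ᵥ (fun p : Fin 2 × Fin 2 => u p.1 * (starRingEnd ℂ) (u p.2))
    + star (fun p : Fin 2 × Fin 2 => u p.1 * (starRingEnd ℂ) (w p.2)) ⬝ᵥ
      ρ *ᵥ (fun p : Fin 2 × Fin 2 => u p.1 * (starRingEnd ℂ) (w p.2))
    = star u ⬝ᵥ (ptraceB ρ) *ᵥ u := by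
  have h00 := hc 0 0; have h01 := hc 0 1; have h10 := hc 1 0; have h11 := hc 1 1
  norm_num at h00 h01 h10 h11
  simp only [dotProduct, mulVec, ptraceB, Matrix.of_apply, Pi.star_apply, RCLike.star_def,
    _root_.map_mul, Complex.conj_conj, Fintype.sum_prod_type, Fin.sum_univ_two, dotProduct]
  linear_combination
    (starRingEnd ℂ) (u 0) * u 0 * ρ (0,0) (0,0) * h00 +
    (starRingEnd ℂ) (u 0) * u 0 * ρ (0,0) (0,1) * h01 +
    (starRingEnd ℂ) (u 0) * u 0 * ρ (0,1) (0,0) * h10 +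
    (starRingEnd ℂ) (u 0) * u 0 * ρ (0,1) (0,1) * h11 +
    (starRingEnd ℂ) (u 0) * u 1 * ρ (0,0) (1,0) * h00 +
    (starRingEnd ℂ) (u 0) * u 1 * ρ (0,0) (1,1) * h01 +
    (starRingEnd ℂ) (u 0) * u 1 * ρ (0,1) (1,0) * h10 +
    (starRingEnd ℂ) (u 0) * u 1 * ρ (0,1) (1,1) * h11 +
    (starRingEnd ℂ) (u 1) * u 0 * ρ (1,0) (0,0) * h00 +
    (starRingEnd ℂ) (u 1) * u 0 * ρ (1,0) (0,1) * h01 +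
    (starRingEnd ℂ) (u 1) * u 0 * ρ (1,1) (0,0) * h10 +
    (starRingEnd ℂ) (u 1) * u 0 * ρ (1,1) (0,1) * h11 +
    (starRingEnd ℂ) (u 1) * u 1 * ρ (1,0) (1,0) * h00 +
    (starRingEnd ℂ) (u 1) * u 1 * ρ (1,0) (1,1) * h01 +
    (starRingEnd ℂ) (u 1) * u 1 * ρ (1,1) (1,0) * h10 +
    (starRingEnd ℂ) (u 1) * u 1 * ρ (1,1) (1,1) * h11

lemma trace_fid (ρ : Matrix (Fin 2 × Fin 2) (Fin 2 × Fin 2) ℂ) :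
    (ρ * phiPlus).trace = star bellPlusVec ⬝ᵥ ρ *ᵥ bellPlusVec := by
  simp only [Matrix.trace, Matrix.diag, Matrix.mul_apply, phiPlus, Matrix.vecMulVec_apply,
    dotProduct, mulVec, Pi.star_apply, dotProduct, Finset.mul_sum]
  refine Finset.sum_congr rfl fun p _ => Finset.sum_congr rfl fun q _ => by ring

lemma trace_ptraceB (ρ : Matrix (Fin 2 × Fin 2) (Fin 2 × Fin 2) ℂ) :
    (ptraceB ρ).trace = ρ.trace := by
  simp [Matrix.trace, Matrix.diag, ptraceB, Fintype.sum_prod_type]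

lemma bell_decomp (u w : Fin 2 → ℂ)
    (hcomp : ∀ b b' : Fin 2, u b * (starRingEnd ℂ) (u b') + w b * (starRingEnd ℂ) (w b')
      = if b = b' then 1 else 0) :
    ((Real.sqrt 2 : ℝ) : ℂ) • bellPlusVec
      = (fun p : Fin 2 × Fin 2 => u p.1 * (starRingEnd ℂ) (u p.2))
      + (fun p : Fin 2 × Fin 2 => w p.1 * (starRingEnd ℂ) (w p.2)) := by
  funext p
  simp only [Pi.smul_apply, Pi.add_apply, bellPlusVec, smul_eq_mul]
  rw [hcomp p.1 p.2]
  rcases eq_or_ne p.1 p.2 with h | h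
  · simp only [if_pos h]
    rw [← Complex.ofReal_mul, mul_inv_cancel₀ (by positivity : Real.sqrt 2 ≠ 0),
      Complex.ofReal_one]
  · simp [h]


lemma cauchy_discrim (a b r : ℝ) (hquad : ∀ t : ℝ, 0 ≤ a * (t * t) + (-(2 * r)) * t + b) :
    r * r ≤ a * b := by
  have hdisc := discrim_le_zero hquad
  rw [discrim] at hdisc
  nlinarith [hdisc]

lemma real_arith (lam a b r c : ℝ) (ha0 : 0 ≤ a) (hb0 : 0 ≤ b) (ha_le : a ≤ lam)
    (hb_le : b ≤ 1 - lam) (hr2 : r * r ≤ a * b) (h2c : 2 * c ≤ a + 2 * r + b)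
    (hc1 : 1 / 2 ≤ c) (hc2 : c ≤ 1) :
    (1 - 2 * Real.sqrt (c * (1 - c))) / 2 ≤ lam ∧
      lam ≤ (1 + 2 * Real.sqrt (c * (1 - c))) / 2 := by
  have hlam0 : 0 ≤ lam := le_trans ha0 ha_le
  have hlam1 : lam ≤ 1 := by linarith
  have hab : a * b ≤ lam * (1 - lam) := mul_le_mul ha_le hb_le hb0 hlam0
  have hr_le : r ≤ Real.sqrt (lam * (1 - lam)) := by
    calc r ≤ |r| := le_abs_self r
      _ = Real.sqrt (r * r) := (Real.sqrt_mul_self_eq_abs r).symm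
      _ ≤ Real.sqrt (a * b) := Real.sqrt_le_sqrt hr2
      _ ≤ Real.sqrt (lam * (1 - lam)) := Real.sqrt_le_sqrt hab
  set s := Real.sqrt (lam * (1 - lam)) with hs
  have hs0 : 0 ≤ s := Real.sqrt_nonneg _
  have hs2 : s ^ 2 = lam * (1 - lam) := Real.sq_sqrt (mul_nonneg hlam0 (by linarith))
  set q := Real.sqrt (c * (1 - c)) with hqdef
  have hq0 : 0 ≤ q := Real.sqrt_nonneg _
  have hq2 : q ^ 2 = c * (1 - c) := Real.sq_sqrt (mul_nonneg (by linarith) (by linarith))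
  have h1 : 2 * c - 1 ≤ 2 * s := by linarith
  have h1sq : (2 * c - 1) ^ 2 ≤ (2 * s) ^ 2 := by nlinarith
  have h2 : (2 * lam - 1) ^ 2 ≤ (2 * q) ^ 2 := by nlinarith
  constructor <;> nlinarith [h2, hq0]

set_option maxHeartbeats 1600000 in
lemma aux_main (ρ : Matrix (Fin 2 × Fin 2) (Fin 2 × Fin 2) ℂ)
    (hρ : ρ.PosSemidef) (htr : ρ.trace = 1)
    (c : ℝ) (hc : c ∈ Set.Icc (1/2 : ℝ) 1)
    (hfid : (c : ℂ) ≤ (ρ * phiPlus).trace)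
    (hA : (ptraceB ρ).IsHermitian) (i j : Fin 2) (hij : i ≠ j) :
    (1 - 2 * Real.sqrt (c * (1 - c))) / 2 ≤ hA.eigenvalues i ∧
      hA.eigenvalues i ≤ (1 + 2 * Real.sqrt (c * (1 - c))) / 2 := by
  set lam : ℝ := hA.eigenvalues i with hlam
  set U : Matrix (Fin 2) (Fin 2) ℂ := (hA.eigenvectorUnitary : Matrix (Fin 2) (Fin 2) ℂ) with hU
  set u : Fin 2 → ℂ := fun a => U a i with hu
  set w : Fin 2 → ℂ := fun a => U a j with hw
  have h1 : U * Uᴴ = 1 := by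
    rw [← Matrix.star_eq_conjTranspose]
    exact (Matrix.mem_unitaryGroup_iff).mp hA.eigenvectorUnitary.2
  have huniv : (Finset.univ : Finset (Fin 2)) = {i, j} := by
    symm; apply Finset.eq_univ_of_card; rw [Finset.card_pair hij]; rfl
  have hcomp : ∀ b b' : Fin 2, u b * (starRingEnd ℂ) (u b') + w b * (starRingEnd ℂ) (w b')
      = if b = b' then 1 else 0 := by
    intro b b'
    have := congrFun (congrFun h1 b) b'
    rw [Matrix.mul_apply, huniv, Finset.sum_insert (by simp [hij]), Finset.sum_singleton] at this
    simpa [conjTranspose_apply, Matrix.one_apply, RCLike.star_def] using this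
  have hcomp' : ∀ b b' : Fin 2, w b * (starRingEnd ℂ) (w b') + u b * (starRingEnd ℂ) (u b')
      = if b = b' then 1 else 0 := fun b b' => by rw [add_comm]; exact hcomp b b'
  have h2 : Uᴴ * U = 1 := by
    rw [← Matrix.star_eq_conjTranspose]
    exact (Matrix.mem_unitaryGroup_iff').mp hA.eigenvectorUnitary.2
  have hnorm : star u ⬝ᵥ u = 1 := by
    have := congrFun (congrFun h2 i) i
    rw [Matrix.mul_apply] at this
    simpa [dotProduct, conjTranspose_apply, Matrix.one_apply, RCLike.star_def] using this
  have heig : (ptraceB ρ) *ᵥ u = (lam : ℂ) • u := by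
    have h3 := hA.mulVec_eigenvectorBasis i
    have h4 : u = ⇑(hA.eigenvectorBasis i) := by
      funext a; rw [hu]; simp [hU, Matrix.IsHermitian.eigenvectorUnitary_apply]
    rw [h4, h3]
    funext a; simp [Pi.smul_apply, Complex.real_smul, hlam]
  have hudot : star u ⬝ᵥ (ptraceB ρ) *ᵥ u = (lam : ℂ) := by
    rw [heig, dotProduct_smul, hnorm, smul_eq_mul, mul_one]
  -- trace split
  have hcompc : ∀ a b : Fin 2, (starRingEnd ℂ) (u a) * u b + (starRingEnd ℂ) (w a) * w b
      = if a = b then 1 else 0 := by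
    intro a b
    have := congrArg (starRingEnd ℂ) (hcomp a b)
    simpa [apply_ite, mul_comm] using this
  have hwdot : star w ⬝ᵥ (ptraceB ρ) *ᵥ w = 1 - (lam : ℂ) := by
    have hsum : star u ⬝ᵥ (ptraceB ρ) *ᵥ u + star w ⬝ᵥ (ptraceB ρ) *ᵥ w
        = (ptraceB ρ).trace := by
      have h00 := hcompc 0 0; have h01 := hcompc 0 1
      have h10 := hcompc 1 0; have h11 := hcompc 1 1
      norm_num at h00 h01 h10 h11
      simp only [dotProduct, mulVec, Matrix.trace, Matrix.diag, Pi.star_apply, RCLike.star_def,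
        Fin.sum_univ_two, dotProduct]
      linear_combination (ptraceB ρ) 0 0 * h00 + (ptraceB ρ) 0 1 * h01 +
        (ptraceB ρ) 1 0 * h10 + (ptraceB ρ) 1 1 * h11
    rw [hudot, trace_ptraceB, htr] at hsum
    linear_combination hsum
  -- quadratic-form splittings
  have hsplit_u := marginal_split ρ u w hcomp
  have hsplit_w := marginal_split ρ w u hcomp'
  rw [hudot] at hsplit_u
  rw [hwdot] at hsplit_w
  have hbell := bell_decomp u w hcomp
  set x : Fin 2 × Fin 2 → ℂ := fun p => u p.1 * (starRingEnd ℂ) (u p.2) with hx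
  set y : Fin 2 × Fin 2 → ℂ := fun p => w p.1 * (starRingEnd ℂ) (w p.2) with hy
  set x' : Fin 2 × Fin 2 → ℂ := fun p => u p.1 * (starRingEnd ℂ) (w p.2) with hx'
  set y' : Fin 2 × Fin 2 → ℂ := fun p => w p.1 * (starRingEnd ℂ) (u p.2) with hy'
  -- nonnegativity
  have hposx := hρ.dotProduct_mulVec_nonneg x; rw [Complex.nonneg_iff] at hposx
  have hposy := hρ.dotProduct_mulVec_nonneg y; rw [Complex.nonneg_iff] at hposy
  have hposx' := hρ.dotProduct_mulVec_nonneg x'; rw [Complex.nonneg_iff] at hposx'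
  have hposy' := hρ.dotProduct_mulVec_nonneg y'; rw [Complex.nonneg_iff] at hposy'
  set a : ℝ := (star x ⬝ᵥ ρ *ᵥ x).re with ha
  set b : ℝ := (star y ⬝ᵥ ρ *ᵥ y).re with hb
  set r : ℝ := (star x ⬝ᵥ ρ *ᵥ y).re with hr
  have ha0 : 0 ≤ a := hposx.1
  have hb0 : 0 ≤ b := hposy.1
  have ha_le : a ≤ lam := by
    have := congrArg Complex.re hsplit_u
    simp only [Complex.add_re, Complex.ofReal_re] at this
    linarith [hposx'.1]
  have hb_le : b ≤ 1 - lam := by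
    have := congrArg Complex.re hsplit_w
    simp only [Complex.add_re, Complex.sub_re, Complex.one_re, Complex.ofReal_re] at this
    linarith [hposy'.1]
  -- the conjugate cross term
  have hyx : (star y ⬝ᵥ ρ *ᵥ x).re = r := by
    rw [herm_swap ρ hρ.1 x y]
    simp [RCLike.star_def]
    rfl
  -- fidelity lower bound
  have hF : c ≤ (star bellPlusVec ⬝ᵥ ρ *ᵥ bellPlusVec).re := by
    rw [Complex.le_def] at hfid
    have := hfid.1
    rwa [Complex.ofReal_re, trace_fid ρ] at this
  have h2F : star x ⬝ᵥ ρ *ᵥ x + star x ⬝ᵥ ρ *ᵥ y + (star y ⬝ᵥ ρ *ᵥ x + star y ⬝ᵥ ρ *ᵥ y)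
      = 2 * (star bellPlusVec ⬝ᵥ ρ *ᵥ bellPlusVec) := by
    have e1 : star (x + y) ⬝ᵥ ρ *ᵥ (x + y)
        = star x ⬝ᵥ ρ *ᵥ x + star x ⬝ᵥ ρ *ᵥ y + (star y ⬝ᵥ ρ *ᵥ x + star y ⬝ᵥ ρ *ᵥ y) := by
      simp only [star_add, add_dotProduct, Matrix.mulVec_add, dotProduct_add]
      ring
    rw [← hbell] at e1
    rw [← e1]
    simp only [star_smul, smul_dotProduct, Matrix.mulVec_smul, dotProduct_smul, smul_eq_mul,
      RCLike.star_def, Complex.conj_ofReal]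
    rw [← mul_assoc, ← Complex.ofReal_mul, Real.mul_self_sqrt (by norm_num : (0:ℝ) ≤ 2)]
    norm_num
  have h2c : 2 * c ≤ a + 2 * r + b := by
    have := congrArg Complex.re h2F
    simp only [Complex.add_re, Complex.mul_re, Complex.re_ofNat, Complex.im_ofNat] at this
    rw [hyx] at this
    linarith [hF]
  -- quadratic nonnegativity and discriminant
  have hquad : ∀ t : ℝ, 0 ≤ a * (t * t) + (-(2 * r)) * t + b := by
    intro t
    have hq := hρ.dotProduct_mulVec_nonneg ((t : ℂ) • x - y)
    rw [Complex.nonneg_iff] at hq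
    have e : star ((t:ℂ) • x - y) ⬝ᵥ ρ *ᵥ ((t:ℂ) • x - y)
        = (t:ℂ) * (t:ℂ) * (star x ⬝ᵥ ρ *ᵥ x) - (t:ℂ) * (star x ⬝ᵥ ρ *ᵥ y)
          - (t:ℂ) * (star y ⬝ᵥ ρ *ᵥ x) + star y ⬝ᵥ ρ *ᵥ y := by
      simp only [star_sub, star_smul, sub_dotProduct, dotProduct_sub, Matrix.mulVec_sub,
        Matrix.mulVec_smul, smul_dotProduct, dotProduct_smul, smul_eq_mul, RCLike.star_def,
        Complex.conj_ofReal]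
      ring
    rw [e] at hq
    have h5 := hq.1
    simp only [Complex.add_re, Complex.sub_re, Complex.re_ofReal_mul, mul_assoc] at h5
    rw [hyx] at h5
    nlinarith [h5]
  have hr2 : r * r ≤ a * b := cauchy_discrim a b r hquad
  exact real_arith lam a b r c ha0 hb0 ha_le hb_le hr2 h2c hc.1 hc.2

end FidelityAux

theorem fidelity_marginal_tradeoff
    (ρ : Matrix (Fin 2 × Fin 2) (Fin 2 × Fin 2) ℂ)
    (hρ : ρ.PosSemidef) (htr : ρ.trace = 1)
    (c : ℝ) (hc : c ∈ Set.Icc (1/2 : ℝ) 1)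
    (hfid : (c : ℂ) ≤ (ρ * phiPlus).trace)
    (hA : (ptraceB ρ).IsHermitian) :
    ∀ i, (1 - 2 * Real.sqrt (c * (1 - c))) / 2 ≤ hA.eigenvalues i ∧
      hA.eigenvalues i ≤ (1 + 2 * Real.sqrt (c * (1 - c))) / 2 := by
  intro i
  fin_cases i
  · exact FidelityAux.aux_main ρ hρ htr c hc hfid hA 0 1 (by decide)
  · exact FidelityAux.aux_main ρ hρ htr c hc hfid hA 1 0 (by decide)
end
end

section
/- Let P = (|e_j⟩⟨e_j|)_{j=1}^d be a rank-1 projective measurement on H₁⊗H₂ (with dim H₁·dim H₂ = d), and let α_max be the largest Schmidt coefficient among all the states |e_j⟩. Then for any separable POVM F = (F^j)_{j=1}^d on H₁⊗H₂, (1/d)·Σ_j Tr(F^j |e_j⟩⟨e_j|) ≤ α_max². -/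
open Matrix ComplexOrder

noncomputable section

/-- A separable measurement operator on a bipartite system: a nonnegative
combination of projectors onto (unit) product states. -/
def IsSeparableOp {n₁ n₂ : ℕ} (F : Matrix (Fin n₁ × Fin n₂) (Fin n₁ × Fin n₂) ℂ) : Prop :=
  ∃ (K : ℕ) (lam : Fin K → ℝ) (u : Fin K → Fin n₁ → ℂ) (v : Fin K → Fin n₂ → ℂ),
    (∀ k, 0 ≤ lam k) ∧ (∀ k, ∑ i, ‖u k i‖ ^ 2 = 1) ∧
    (∀ k, ∑ i, ‖v k i‖ ^ 2 = 1) ∧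
    F = ∑ k, (lam k : ℂ) •
      Matrix.vecMulVec (fun p => u k p.1 * v k p.2) (star fun p => u k p.1 * v k p.2)

lemma trace_vvmul {ι : Type*} [Fintype ι] (w x : ι → ℂ) :
    (Matrix.vecMulVec w (star w) * Matrix.vecMulVec x (star x)).trace
      = (∑ p, (starRingEnd ℂ) (x p) * w p) * (starRingEnd ℂ) (∑ p, (starRingEnd ℂ) (x p) * w p) := by
  have : (starRingEnd ℂ) (∑ p, (starRingEnd ℂ) (x p) * w p) = ∑ q, (starRingEnd ℂ) (w q) * x q := by
    simp [map_sum, mul_comm]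
  rw [this]
  simp only [Matrix.trace, Matrix.diag, Matrix.mul_apply, Matrix.vecMulVec_apply,
    Pi.star_apply, Complex.star_def, Finset.sum_mul, Finset.mul_sum]
  rw [Finset.sum_comm]
  exact Finset.sum_congr rfl fun p _ => Finset.sum_congr rfl fun q _ => by ring

lemma trace_vv {ι : Type*} [Fintype ι] (w : ι → ℂ) :
    ((Matrix.vecMulVec w (star w)).trace).re = ∑ p, ‖w p‖ ^ 2 := by
  simp only [Matrix.trace, Matrix.diag, Matrix.vecMulVec_apply, Pi.star_apply, Complex.star_def,
    Complex.mul_conj, Complex.re_sum]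
  simp [Complex.sq_norm]

lemma bessel' {r n : ℕ} (a : Fin r → Fin n → ℂ) (u : Fin n → ℂ)
    (hON : ∀ l l', ∑ i, (starRingEnd ℂ) (a l i) * a l' i = if l = l' then 1 else 0)
    (hu : ∑ i, ‖u i‖ ^ 2 = 1) :
    ∑ l, ‖∑ i, (starRingEnd ℂ) (a l i) * u i‖ ^ 2 ≤ 1 := by
  let A : Fin r → EuclideanSpace ℂ (Fin n) := fun l => WithLp.toLp 2 (a l)
  let U : EuclideanSpace ℂ (Fin n) := WithLp.toLp 2 u
  have hA : Orthonormal ℂ A := by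
    rw [orthonormal_iff_ite]
    intro l l'
    simpa [A, PiLp.inner_apply, RCLike.inner_apply, mul_comm] using hON l l'
  have h := hA.sum_inner_products_le (s := Finset.univ) U
  have hUnorm : ‖U‖ ^ 2 = 1 := by
    rw [EuclideanSpace.norm_eq, Real.sq_sqrt (by positivity)]
    simpa [U] using hu
  calc ∑ l, ‖∑ i, (starRingEnd ℂ) (a l i) * u i‖ ^ 2
      = ∑ l, ‖(inner ℂ (A l) U : ℂ)‖ ^ 2 := by
        refine Finset.sum_congr rfl fun l _ => ?_
        simp [A, U, PiLp.inner_apply, RCLike.inner_apply, mul_comm]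
    _ ≤ ‖U‖ ^ 2 := h
    _ = 1 := hUnorm

lemma core_bound {n₁ n₂ r : ℕ} (α : Fin r → ℝ) (a : Fin r → Fin n₁ → ℂ)
    (b : Fin r → Fin n₂ → ℂ) (e : Fin n₁ × Fin n₂ → ℂ) (hα : ∀ l, 0 ≤ α l)
    (haON : ∀ l l', ∑ i, (starRingEnd ℂ) (a l i) * a l' i = if l = l' then 1 else 0)
    (hbON : ∀ l l', ∑ i, (starRingEnd ℂ) (b l i) * b l' i = if l = l' then 1 else 0)
    (hdec : e = fun p => ∑ l, (α l : ℂ) * a l p.1 * b l p.2)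
    (αmax : ℝ) (h0 : 0 ≤ αmax) (hle : ∀ l, α l ≤ αmax)
    (u : Fin n₁ → ℂ) (v : Fin n₂ → ℂ)
    (hu : ∑ i, ‖u i‖ ^ 2 = 1) (hv : ∑ i, ‖v i‖ ^ 2 = 1) :
    ‖∑ p, (starRingEnd ℂ) (e p) * (u p.1 * v p.2)‖ ^ 2 ≤ αmax ^ 2 := by
  set x : Fin r → ℂ := fun l => ∑ i, (starRingEnd ℂ) (a l i) * u i with hx
  set y : Fin r → ℂ := fun l => ∑ m, (starRingEnd ℂ) (b l m) * v m with hy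
  have hc : (∑ p, (starRingEnd ℂ) (e p) * (u p.1 * v p.2))
      = ∑ l, (α l : ℂ) * (x l * y l) := by
    rw [hdec]
    calc (∑ p : Fin n₁ × Fin n₂, (starRingEnd ℂ) (∑ l, (α l : ℂ) * a l p.1 * b l p.2) * (u p.1 * v p.2))
        = ∑ p : Fin n₁ × Fin n₂, ∑ l, (α l : ℂ) *
            (((starRingEnd ℂ) (a l p.1) * u p.1) * ((starRingEnd ℂ) (b l p.2) * v p.2)) := by
          refine Finset.sum_congr rfl fun p _ => ?_
          rw [map_sum, Finset.sum_mul]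
          refine Finset.sum_congr rfl fun l _ => ?_
          simp only [_root_.map_mul, Complex.conj_ofReal]
          ring
      _ = ∑ l, ∑ p : Fin n₁ × Fin n₂, (α l : ℂ) *
            (((starRingEnd ℂ) (a l p.1) * u p.1) * ((starRingEnd ℂ) (b l p.2) * v p.2)) :=
          Finset.sum_comm
      _ = ∑ l, (α l : ℂ) * (x l * y l) := by
          refine Finset.sum_congr rfl fun l _ => ?_
          rw [← Finset.mul_sum, Fintype.sum_prod_type, hx, hy]
          simp only [← Finset.sum_mul_sum]
  rw [hc]
  have habs : ‖∑ l, (α l : ℂ) * (x l * y l)‖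
      ≤ αmax * ∑ l, ‖x l‖ * ‖y l‖ := by
    calc ‖∑ l, (α l : ℂ) * (x l * y l)‖
        ≤ ∑ l, ‖(α l : ℂ) * (x l * y l)‖ := by
          simpa using norm_sum_le Finset.univ (fun l => (α l : ℂ) * (x l * y l))
      _ = ∑ l, α l * (‖x l‖ * ‖y l‖) := by
          refine Finset.sum_congr rfl fun l _ => ?_
          simp [_root_.map_mul, abs_of_nonneg (hα l)]
      _ ≤ ∑ l, αmax * (‖x l‖ * ‖y l‖) := by
          refine Finset.sum_le_sum fun l _ => ?_
          exact mul_le_mul_of_nonneg_right (hle l) (by positivity)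
      _ = αmax * ∑ l, ‖x l‖ * ‖y l‖ := by rw [Finset.mul_sum]
  have hCS : (∑ l, ‖x l‖ * ‖y l‖) ^ 2 ≤ 1 := by
    calc (∑ l, ‖x l‖ * ‖y l‖) ^ 2
        ≤ (∑ l, ‖x l‖ ^ 2) * ∑ l, ‖y l‖ ^ 2 :=
          Finset.sum_mul_sq_le_sq_mul_sq _ _ _
      _ ≤ 1 * 1 := mul_le_mul (bessel' a u haON hu) (bessel' b v hbON hv)
            (Finset.sum_nonneg fun l _ => by positivity)
            (le_trans (Finset.sum_nonneg fun l _ => by positivity) (bessel' a u haON hu))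
      _ = 1 := one_mul 1
  calc ‖∑ l, (α l : ℂ) * (x l * y l)‖ ^ 2
      ≤ (αmax * ∑ l, ‖x l‖ * ‖y l‖) ^ 2 :=
        pow_le_pow_left₀ (norm_nonneg _) habs 2
    _ = αmax ^ 2 * (∑ l, ‖x l‖ * ‖y l‖) ^ 2 := by ring
    _ ≤ αmax ^ 2 * 1 := mul_le_mul_of_nonneg_left hCS (by positivity)
    _ = αmax ^ 2 := mul_one _

lemma sep_helper {n₁ n₂ : ℕ} {F : Matrix (Fin n₁ × Fin n₂) (Fin n₁ × Fin n₂) ℂ}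
    (hF : IsSeparableOp F) (e : Fin n₁ × Fin n₂ → ℂ) (αmax : ℝ)
    (hbound : ∀ (u : Fin n₁ → ℂ) (v : Fin n₂ → ℂ), (∑ i, ‖u i‖ ^ 2 = 1) →
      (∑ i, ‖v i‖ ^ 2 = 1) →
      ‖∑ p, (starRingEnd ℂ) (e p) * (u p.1 * v p.2)‖ ^ 2 ≤ αmax ^ 2) :
    ((F * Matrix.vecMulVec e (star e)).trace).re ≤ αmax ^ 2 * (F.trace).re := by
  obtain ⟨K, lam, u, v, hlam, hu, hv, hFeq⟩ := hF
  have hψ : ∀ k, ∑ p : Fin n₁ × Fin n₂, ‖u k p.1 * v k p.2‖ ^ 2 = 1 := by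
    intro k
    rw [Fintype.sum_prod_type]
    simp only [norm_mul, mul_pow]
    rw [← Finset.sum_mul_sum, hu, hv, one_mul]
  have htr : (F.trace).re = ∑ k, lam k := by
    rw [hFeq, Matrix.trace_sum]
    simp only [Matrix.trace_smul, smul_eq_mul]
    rw [Complex.re_sum]
    refine Finset.sum_congr rfl fun k _ => ?_
    rw [Complex.re_ofReal_mul, trace_vv, hψ k, mul_one]
  have hmain : ((F * Matrix.vecMulVec e (star e)).trace).re ≤ αmax ^ 2 * ∑ k, lam k := by
    rw [hFeq, Finset.sum_mul, Matrix.trace_sum]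
    simp only [smul_mul_assoc, Matrix.trace_smul, smul_eq_mul]
    rw [Complex.re_sum]
    have hterm : ∀ k, ((lam k : ℂ) *
        (Matrix.vecMulVec (fun p : Fin n₁ × Fin n₂ => u k p.1 * v k p.2)
            (star fun p : Fin n₁ × Fin n₂ => u k p.1 * v k p.2) *
          Matrix.vecMulVec e (star e)).trace).re
        = lam k *
          ‖∑ p : Fin n₁ × Fin n₂, (starRingEnd ℂ) (e p) * (u k p.1 * v k p.2)‖ ^ 2 := by
      intro k
      rw [trace_vvmul (fun p => u k p.1 * v k p.2) e, Complex.mul_conj, ← Complex.ofReal_mul,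
        Complex.ofReal_re, Complex.sq_norm]
    refine le_trans (le_of_eq (Finset.sum_congr rfl fun k _ => hterm k)) ?_
    refine le_trans (Finset.sum_le_sum fun k (_ : k ∈ Finset.univ) =>
      mul_le_mul_of_nonneg_left (hbound (u k) (v k) (hu k) (hv k)) (hlam k)) ?_
    rw [← Finset.sum_mul, mul_comm]
  rw [htr]; exact hmain

theorem separable_povm_bound (n₁ n₂ d r : ℕ) (hd : d = n₁ * n₂)
    (e : Fin d → Fin n₁ × Fin n₂ → ℂ)
    -- the rank-1 projectors |e_j⟩⟨e_j| form a projective measurement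
    (hsum : ∑ j, Matrix.vecMulVec (e j) (star (e j)) = 1)
    (hunit : ∀ j, ∑ p, ‖e j p‖ ^ 2 = 1)
    -- Schmidt decompositions of the e_j
    (α : Fin d → Fin r → ℝ) (a : Fin d → Fin r → Fin n₁ → ℂ) (b : Fin d → Fin r → Fin n₂ → ℂ)
    (hα : ∀ j l, 0 ≤ α j l)
    (haON : ∀ j l l', ∑ i, (starRingEnd ℂ) (a j l i) * a j l' i = if l = l' then 1 else 0)
    (hbON : ∀ j l l', ∑ i, (starRingEnd ℂ) (b j l i) * b j l' i = if l = l' then 1 else 0)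
    (hdec : ∀ j, e j = fun p => ∑ l, (α j l : ℂ) * a j l p.1 * b j l p.2)
    (αmax : ℝ) (hαmax : IsGreatest {x : ℝ | ∃ j l, x = α j l} αmax)
    -- the separable POVM
    (F : Fin d → Matrix (Fin n₁ × Fin n₂) (Fin n₁ × Fin n₂) ℂ)
    (hFsep : ∀ j, IsSeparableOp (F j)) (hFsum : ∑ j, F j = 1) :
    (1 / d : ℝ) * ∑ j, ((F j * Matrix.vecMulVec (e j) (star (e j))).trace).re ≤ αmax ^ 2 := by
  have h0 : 0 ≤ αmax := by
    obtain ⟨j, l, h⟩ := hαmax.1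
    exact h ▸ hα j l
  have hle : ∀ j l, α j l ≤ αmax := fun j l => hαmax.2 ⟨j, l, rfl⟩
  have hdpos : (0 : ℝ) < d := by
    obtain ⟨j, _, _⟩ := hαmax.1
    exact_mod_cast j.pos
  have hS : (∑ j, ((F j * Matrix.vecMulVec (e j) (star (e j))).trace).re) ≤ αmax ^ 2 * d := by
    calc (∑ j, ((F j * Matrix.vecMulVec (e j) (star (e j))).trace).re)
        ≤ ∑ j, αmax ^ 2 * ((F j).trace).re := Finset.sum_le_sum fun j _ =>
          sep_helper (hFsep j) (e j) αmax fun u v hu hv =>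
            core_bound (α j) (a j) (b j) (e j) (hα j) (haON j) (hbON j) (hdec j)
              αmax h0 (hle j) u v hu hv
      _ = αmax ^ 2 * ∑ j, ((F j).trace).re := by rw [Finset.mul_sum]
      _ = αmax ^ 2 * d := by
          have : (∑ j, ((F j).trace).re) = ((∑ j, F j).trace).re := by
            rw [Matrix.trace_sum, Complex.re_sum]
          rw [this, hFsum, Matrix.trace_one]
          norm_num [Fintype.card_prod, hd]
  calc (1 / d : ℝ) * ∑ j, ((F j * Matrix.vecMulVec (e j) (star (e j))).trace).re
      ≤ (1 / d : ℝ) * (αmax ^ 2 * d) := by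
        exact mul_le_mul_of_nonneg_left hS (by positivity)
    _ = αmax ^ 2 := by field_simp
end
end

section
/- Consider the semidefinite program: maximize Tr(σ_z ρ_A) over two-qubit density matrices ρ subject to Tr(Φ⁺ρ) ≥ c, for c ∈ [1/2,1). The dual feasibility condition λ₁I ≥ λ₂Φ⁺ + σ_z⊗I with λ₂ ≥ 0 is satisfied by λ₁ = √(c/(1−c)), λ₂ = (2c−1)/√(c(1−c)), and yields λ₁ − λ₂c = 2√(c(1−c)); hence Tr(σ_z ρ_A) ≤ 2√(c(1−c)) for any feasible ρ. -/
open Matrix Kronecker ComplexOrder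

noncomputable section

def pauliZ : Matrix (Fin 2) (Fin 2) ℂ := !![1, 0; 0, -1]

lemma psd_trace_nonneg {n : Type*} [Fintype n] {M : Matrix n n ℂ}
    (hM : M.PosSemidef) : 0 ≤ M.trace := by
  classical
  apply Finset.sum_nonneg
  intro i _
  have := hM.dotProduct_mulVec_nonneg (Pi.single i 1)
  simpa [dotProduct, mulVec, Pi.single_apply, Finset.mul_sum] using this

open scoped MatrixOrder in
lemma trace_mul_nonneg' {n : Type*} [Fintype n] [DecidableEq n] {A B : Matrix n n ℂ}
    (hA : A.PosSemidef) (hB : B.PosSemidef) : 0 ≤ (A * B).trace := by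
  obtain ⟨C, rfl⟩ := CStarAlgebra.nonneg_iff_eq_star_mul_self.mp hB.nonneg
  rw [← mul_assoc, Matrix.trace_mul_cycle]
  exact psd_trace_nonneg (hA.mul_mul_conjTranspose_same C)

lemma trace_kron_one {n m : Type*} [Fintype n] [Fintype m] [DecidableEq m]
    (A : Matrix n n ℂ) (ρ : Matrix (n × m) (n × m) ℂ) :
    ((A ⊗ₖ (1 : Matrix m m ℂ)) * ρ).trace = (A * ptraceB ρ).trace := by
  simp only [Matrix.trace, Matrix.diag, Matrix.mul_apply, ptraceB, Matrix.of_apply,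
    kroneckerMap_apply, Matrix.one_apply, Fintype.sum_prod_type, mul_ite, mul_one, mul_zero,
    ite_mul, zero_mul, Finset.sum_ite_eq, Finset.mem_univ, if_true, Finset.mul_sum]
  exact Finset.sum_congr rfl fun a _ => Finset.sum_comm

set_option maxHeartbeats 1000000 in
lemma fact_eq (l1 l2 α δ p q : ℝ)
    (hαα : α * α = l1 - l2 / 2 - 1)
    (hδδ : δ * δ = l1 - l2 / 2 + 1)
    (hαδ : α * δ = l2 / 2)
    (hpp : p * p = l1 - 1)
    (hqq : q * q = l1 + 1) :
    ((l1 : ℂ) • (1 : Matrix (Fin 2 × Fin 2) (Fin 2 × Fin 2) ℂ)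
        - (l2 : ℂ) • phiPlus
        - pauliZ ⊗ₖ (1 : Matrix (Fin 2) (Fin 2) ℂ))
      = (Matrix.of fun i j : Fin 2 × Fin 2 =>
          if i = ((0 : Fin 2), (0 : Fin 2)) then
            (if j = ((0 : Fin 2), (0 : Fin 2)) then (α : ℂ)
              else if j = ((1 : Fin 2), (1 : Fin 2)) then -(δ : ℂ) else 0)
          else if i = ((0 : Fin 2), (1 : Fin 2)) then
            (if j = ((0 : Fin 2), (1 : Fin 2)) then (p : ℂ) else 0)
          else if i = ((1 : Fin 2), (0 : Fin 2)) then
            (if j = ((1 : Fin 2), (0 : Fin 2)) then (q : ℂ) else 0)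
          else 0)ᴴ * (Matrix.of fun i j : Fin 2 × Fin 2 =>
          if i = ((0 : Fin 2), (0 : Fin 2)) then
            (if j = ((0 : Fin 2), (0 : Fin 2)) then (α : ℂ)
              else if j = ((1 : Fin 2), (1 : Fin 2)) then -(δ : ℂ) else 0)
          else if i = ((0 : Fin 2), (1 : Fin 2)) then
            (if j = ((0 : Fin 2), (1 : Fin 2)) then (p : ℂ) else 0)
          else if i = ((1 : Fin 2), (0 : Fin 2)) then
            (if j = ((1 : Fin 2), (0 : Fin 2)) then (q : ℂ) else 0)
          else 0) := by
  have h2 : ((Real.sqrt 2)⁻¹ : ℝ) * (Real.sqrt 2)⁻¹ = 1 / 2 := by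
    rw [← mul_inv, Real.mul_self_sqrt (by norm_num)]; norm_num
  have h2C : (((Real.sqrt 2 : ℝ) : ℂ))⁻¹ * (((Real.sqrt 2 : ℝ) : ℂ))⁻¹ = 1 / 2 := by
    rw [← mul_inv, ← Complex.ofReal_mul, Real.mul_self_sqrt (by norm_num)]
    norm_num
  have hδα : δ * α = l2 / 2 := by rw [mul_comm]; exact hαδ
  ext ⟨a, b⟩ ⟨a', b'⟩
  fin_cases a <;> fin_cases b <;> fin_cases a' <;> fin_cases b' <;>
    simp only [Matrix.mul_apply, Matrix.conjTranspose_apply, Matrix.of_apply,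
      Matrix.sub_apply, Matrix.smul_apply, Matrix.one_apply, phiPlus, Matrix.vecMulVec_apply,
      bellPlusVec, Pi.star_apply, kroneckerMap_apply, pauliZ, Fintype.sum_prod_type,
      Fin.sum_univ_two, Prod.mk.injEq, Fin.zero_eta, Fin.mk_one, smul_eq_mul] <;>
    norm_num [Complex.conj_ofReal, h2C] <;> norm_cast <;>
    simp only [hαα, hδδ, hαδ, hδα, hpp, hqq] <;> push_cast <;> ring

theorem sdp_duality_marginal_bound (c : ℝ) (hc : c ∈ Set.Ico (1/2 : ℝ) 1) :
    -- dual feasibility of λ₁ = √(c/(1−c)), λ₂ = (2c−1)/√(c(1−c))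
    (0 ≤ (2 * c - 1) / Real.sqrt (c * (1 - c)) ∧
      (((Real.sqrt (c / (1 - c)) : ℝ) : ℂ) • (1 : Matrix (Fin 2 × Fin 2) (Fin 2 × Fin 2) ℂ)
        - (((2 * c - 1) / Real.sqrt (c * (1 - c)) : ℝ) : ℂ) • phiPlus
        - pauliZ ⊗ₖ (1 : Matrix (Fin 2) (Fin 2) ℂ)).PosSemidef) ∧
    -- dual value
    Real.sqrt (c / (1 - c)) - ((2 * c - 1) / Real.sqrt (c * (1 - c))) * c
      = 2 * Real.sqrt (c * (1 - c)) ∧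
    -- hence the primal bound
    (∀ ρ : Matrix (Fin 2 × Fin 2) (Fin 2 × Fin 2) ℂ, ρ.PosSemidef → ρ.trace = 1 →
      (c : ℂ) ≤ (phiPlus * ρ).trace →
      (pauliZ * ptraceB ρ).trace ≤ ((2 * Real.sqrt (c * (1 - c)) : ℝ) : ℂ)) := by
  obtain ⟨hc2, hc1⟩ := hc
  have hc0 : 0 < c := by linarith
  have h1c : 0 < 1 - c := by linarith
  set s : ℝ := Real.sqrt (c * (1 - c)) with hs_def
  have hs0 : 0 < s := Real.sqrt_pos.mpr (by positivity)
  have hs2 : s ^ 2 = c * (1 - c) := Real.sq_sqrt (by positivity)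
  have hl1 : Real.sqrt (c / (1 - c)) = c / s := by
    have h : c / (1 - c) = c ^ 2 / (c * (1 - c)) := by field_simp
    rw [h, Real.sqrt_div (sq_nonneg c), Real.sqrt_sq hc0.le, hs_def]
  have h2s1 : 2 * s ≤ 1 := by nlinarith [sq_nonneg (2 * c - 1)]
  have hsc : s ≤ c := by
    have h : c * (1 - c) ≤ c * c := by nlinarith
    calc s ≤ Real.sqrt (c * c) := Real.sqrt_le_sqrt h
      _ = c := Real.sqrt_mul_self hc0.le
  have hl2 : 0 ≤ (2 * c - 1) / s := div_nonneg (by linarith) hs0.le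
  -- dual value
  have hval : Real.sqrt (c / (1 - c)) - ((2 * c - 1) / s) * c = 2 * s := by
    rw [hl1]
    field_simp
    nlinarith [hs2]
  -- square-root entries of the Cholesky-type factor
  set α : ℝ := Real.sqrt ((1 - 2 * s) / (2 * s)) with hα_def
  set δ : ℝ := Real.sqrt ((1 + 2 * s) / (2 * s)) with hδ_def
  set p : ℝ := Real.sqrt ((c - s) / s) with hp_def
  set q : ℝ := Real.sqrt ((c + s) / s) with hq_def
  have hα2 : α * α = (1 - 2 * s) / (2 * s) :=
    Real.mul_self_sqrt (div_nonneg (by linarith) (by linarith))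
  have hδ2 : δ * δ = (1 + 2 * s) / (2 * s) :=
    Real.mul_self_sqrt (div_nonneg (by linarith) (by linarith))
  have hp2 : p * p = (c - s) / s :=
    Real.mul_self_sqrt (div_nonneg (by linarith) (by linarith))
  have hq2 : q * q = (c + s) / s :=
    Real.mul_self_sqrt (div_nonneg (by linarith) (by linarith))
  have hαδ : α * δ = (2 * c - 1) / (2 * s) := by
    rw [hα_def, hδ_def, ← Real.sqrt_mul (div_nonneg (by linarith) (by linarith))]
    have key : (1 - 2 * s) / (2 * s) * ((1 + 2 * s) / (2 * s))
        = ((2 * c - 1) / (2 * s)) ^ 2 := by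
      rw [div_mul_div_comm, div_pow]
      congr 1
      · nlinarith [hs2]
      · ring
    rw [key, Real.sqrt_sq (div_nonneg (by linarith) (by linarith))]
  -- dual feasibility (PSD) via the factorization
  have hPSD : (((Real.sqrt (c / (1 - c)) : ℝ) : ℂ) • (1 : Matrix (Fin 2 × Fin 2) (Fin 2 × Fin 2) ℂ)
        - (((2 * c - 1) / s : ℝ) : ℂ) • phiPlus
        - pauliZ ⊗ₖ (1 : Matrix (Fin 2) (Fin 2) ℂ)).PosSemidef := by
    rw [fact_eq (Real.sqrt (c / (1 - c))) ((2 * c - 1) / s) α δ p q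
      (by rw [hl1, hα2]; field_simp; ring)
      (by rw [hl1, hδ2]; field_simp; ring)
      (by rw [hαδ, div_div, mul_comm 2 s])
      (by rw [hl1, hp2]; field_simp)
      (by rw [hl1, hq2]; field_simp)]
    exact Matrix.posSemidef_conjTranspose_mul_self _
  refine ⟨⟨hl2, hPSD⟩, hval, ?_⟩
  intro ρ hρ hρtr hρc
  have hM := trace_mul_nonneg' hPSD hρ
  rw [Matrix.sub_mul, Matrix.sub_mul, Matrix.smul_mul, Matrix.smul_mul, Matrix.one_mul,
    Matrix.trace_sub, Matrix.trace_sub, Matrix.trace_smul, Matrix.trace_smul, hρtr,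
    trace_kron_one, smul_eq_mul, smul_eq_mul, mul_one] at hM
  have hZ : (pauliZ * ptraceB ρ).trace
      ≤ ((Real.sqrt (c / (1 - c)) : ℝ) : ℂ)
        - (((2 * c - 1) / s : ℝ) : ℂ) * (phiPlus * ρ).trace := by
    exact sub_nonneg.mp hM
  have hl2C : (0 : ℂ) ≤ (((2 * c - 1) / s : ℝ) : ℂ) := by exact_mod_cast hl2
  have hmul : (((2 * c - 1) / s : ℝ) : ℂ) * (c : ℂ)
      ≤ (((2 * c - 1) / s : ℝ) : ℂ) * (phiPlus * ρ).trace :=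
    mul_le_mul_of_nonneg_left hρc hl2C
  calc (pauliZ * ptraceB ρ).trace
      ≤ ((Real.sqrt (c / (1 - c)) : ℝ) : ℂ)
        - (((2 * c - 1) / s : ℝ) : ℂ) * (c : ℂ) :=
        hZ.trans (sub_le_sub_left hmul _)
    _ = ((2 * Real.sqrt (c * (1 - c)) : ℝ) : ℂ) := by
        rw [← hs_def]
        push_cast [← hval]
        ring
end
end

section
/- The 4×4 matrix λ₁I − λ₂Φ⁺ − σ_z⊗I is positive semidefinite when λ₁ = √(c/(1−c)) and λ₂ = (2c−1)/√(c(1−c)) for c ∈ [1/2,1), where Φ⁺ is the projector onto (|00⟩+|11⟩)/√2. -/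
open Matrix Kronecker ComplexOrder

noncomputable section

lemma psd_outer {n : Type*} [Fintype n] [DecidableEq n] (v : n → ℂ) :
    (Matrix.vecMulVec v (star v)).PosSemidef := by
  rw [Matrix.posSemidef_iff_dotProduct_mulVec]
  constructor
  · ext i j
    simp [Matrix.vecMulVec, Matrix.conjTranspose_apply, mul_comm]
  · intro x
    have h : Matrix.vecMulVec v (star v) *ᵥ x = ((star v) ⬝ᵥ x) • v := by
      ext i
      simp [Matrix.vecMulVec, Matrix.mulVec, dotProduct, Finset.mul_sum, mul_comm,
        mul_assoc, mul_left_comm]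
    have h3 : star x ⬝ᵥ v = star ((star v) ⬝ᵥ x) := by
      simp [dotProduct, Finset.sum_comm, mul_comm]
    rw [h]
    have h2 : star x ⬝ᵥ (((star v) ⬝ᵥ x) • v) = ((star v) ⬝ᵥ x) * (star x ⬝ᵥ v) := by
      simp [dotProduct_smul, mul_comm]
    rw [h2, h3]
    exact mul_star_self_nonneg _

lemma psd_smul {n : Type*} [Fintype n] {M : Matrix n n ℂ} (hM : M.PosSemidef)
    {r : ℝ} (hr : 0 ≤ r) : ((r : ℂ) • M).PosSemidef := by
  rw [Matrix.posSemidef_iff_dotProduct_mulVec] at hM ⊢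
  constructor
  · unfold Matrix.IsHermitian
    rw [Matrix.conjTranspose_smul, hM.1]
    congr 1
    simp
  · intro x
    rw [Matrix.smul_mulVec, dotProduct_smul]
    exact mul_nonneg (by exact_mod_cast hr) (hM.2 x)

theorem dual_certificate_psd (c : ℝ) (hc : c ∈ Set.Ico (1/2 : ℝ) 1) :
    (((Real.sqrt (c / (1 - c)) : ℝ) : ℂ) • (1 : Matrix (Fin 2 × Fin 2) (Fin 2 × Fin 2) ℂ)
      - (((2 * c - 1) / Real.sqrt (c * (1 - c)) : ℝ) : ℂ) • phiPlus
      - pauliZ ⊗ₖ (1 : Matrix (Fin 2) (Fin 2) ℂ)).PosSemidef := by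
  obtain ⟨hc1, hc2⟩ := hc
  have hcpos : 0 < c := by linarith
  have h1c : 0 < 1 - c := by linarith
  set s : ℝ := Real.sqrt (c * (1 - c)) with hs_def
  have hs : 0 < s := Real.sqrt_pos.mpr (by positivity)
  have hs2 : s ^ 2 = c * (1 - c) := Real.sq_sqrt (by positivity)
  have hl1 : Real.sqrt (c / (1 - c)) = c / s := by
    have h : c / (1 - c) = (c / s) ^ 2 := by
      field_simp
      nlinarith [hs2]
    rw [h, Real.sqrt_sq (by positivity)]
  -- vectors
  set b : ℝ := 1 / (2 * s) + 1 with hb_def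
  have hb : 0 < b := by positivity
  set lam2 : ℝ := (2 * c - 1) / s with hlam2_def
  set v1 : Fin 2 × Fin 2 → ℂ := fun p => if p = (0, 1) then 1 else 0 with hv1
  set v2 : Fin 2 × Fin 2 → ℂ := fun p => if p = (1, 0) then 1 else 0 with hv2
  set v3 : Fin 2 × Fin 2 → ℂ :=
    fun p => if p = (0, 0) then ((-(lam2 / 2) : ℝ) : ℂ)
      else if p = (1, 1) then ((b : ℝ) : ℂ) else 0 with hv3
  have key :
      (((Real.sqrt (c / (1 - c)) : ℝ) : ℂ) • (1 : Matrix (Fin 2 × Fin 2) (Fin 2 × Fin 2) ℂ)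
        - (((2 * c - 1) / Real.sqrt (c * (1 - c)) : ℝ) : ℂ) • phiPlus
        - pauliZ ⊗ₖ (1 : Matrix (Fin 2) (Fin 2) ℂ))
      = ((c / s - 1 : ℝ) : ℂ) • Matrix.vecMulVec v1 (star v1)
        + ((c / s + 1 : ℝ) : ℂ) • Matrix.vecMulVec v2 (star v2)
        + ((1 / b : ℝ) : ℂ) • Matrix.vecMulVec v3 (star v3) := by
    rw [hl1]
    ext ⟨i, j⟩ ⟨k, l⟩
    fin_cases i <;> fin_cases j <;> fin_cases k <;> fin_cases l <;>
      simp [hv1, hv2, hv3, phiPlus, bellPlusVec, pauliZ, Prod.ext_iff, Matrix.vecMulVec_apply, Matrix.one_apply,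
        Matrix.kroneckerMap_apply, ← Complex.ofReal_mul, ← Complex.ofReal_pow] <;>
      first
        | rfl
        | (push_cast
           norm_cast
           try rw [← hs_def]
           try rw [hlam2_def]
           try rw [hb_def]
           try rw [show ((Real.sqrt 2)⁻¹ * (Real.sqrt 2)⁻¹ : ℝ) = 1/2 by
             rw [← mul_inv, Real.mul_self_sqrt (by norm_num)]; norm_num]
           field_simp
           all_goals first
             | exact inv_eq_one_div _
             | ring1
             | (norm_num; done)
             | linear_combination (-16 * s^3 : ℝ) * hs2
             | linear_combination (16 * s^3 : ℝ) * hs2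
             | (have hs0 : (s:ℂ) ≠ 0 := by exact_mod_cast hs.ne'
                have hb0 : (1 + 2 * (s:ℂ)) ≠ 0 := by exact_mod_cast (by positivity : (1 + 2 * s) ≠ 0)
                have hb0' : (1 + (s:ℂ) * 2) ≠ 0 := by exact_mod_cast (by positivity : (1 + s * 2) ≠ 0)
                have hs2' : (s:ℂ)^2 = c * (1 - c) := by exact_mod_cast hs2
                push_cast
                field_simp
                all_goals ring_nf
                all_goals linear_combination (-4:ℂ) * hs2'))
  rw [key]
  have hc1s : 0 ≤ c / s - 1 := by
    have : s ≤ c := by nlinarith [hs2, hs]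
    rw [sub_nonneg, le_div_iff₀ hs]
    nlinarith [hs2, hs, sq_nonneg (c - s)]
  exact ((psd_smul (psd_outer v1) hc1s).add
    (psd_smul (psd_outer v2) (by positivity))).add
    (psd_smul (psd_outer v3) (by positivity))
end
end
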